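/- For an integer b ≥ 2 and positive integers ℓ and ℓ', the smallest positive integer n such that (b^ℓ − 1)(b^{ℓ'} − 1) divides b^n − 1 is n = (b^{gcd(ℓ,ℓ')} − 1) · lcm(ℓ, ℓ'). -/

import Mathlib

open Finset



private lemma pow_dvd_iff {B k n : ℕ} (hB : 2 ≤ B) (hk : 0 < k) :
    B ^ k - 1 ∣ B ^ n - 1 ↔ k ∣ n := by
  constructor
  · intro h
    have hr : n % k < k := Nat.mod_lt _ hk
    have hsplit : B ^ n = B ^ (n % k) * B ^ (k * (n / k)) := by
      rw [← pow_add]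
      congr 1
      exact (Nat.mod_add_div n k).symm
    have h1 : B ^ k - 1 ∣ B ^ n - B ^ (n % k) := by
      have hd : B ^ k - 1 ∣ B ^ (k * (n / k)) - 1 := by simpa only [one_pow, pow_mul] using Nat.sub_dvd_pow_sub_pow (B ^ k) 1 (n / k)
      obtain ⟨t, ht⟩ := hd
      refine ⟨B ^ (n % k) * t, ?_⟩
      have h1 : 1 ≤ B ^ (k * (n / k)) := Nat.one_le_pow _ _ (by omega)
      calc B ^ n - B ^ (n % k) = B ^ (n % k) * (B ^ (k * (n / k)) - 1) := by
            rw [Nat.mul_sub, mul_one, ← hsplit]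
        _ = B ^ (n % k) * ((B ^ k - 1) * t) := by rw [ht]
        _ = (B ^ k - 1) * (B ^ (n % k) * t) := by ring
    have h2 : B ^ k - 1 ∣ B ^ (n % k) - 1 := by
      have hle1 : 1 ≤ B ^ (n % k) := Nat.one_le_pow _ _ (by omega)
      have hle2 : B ^ (n % k) ≤ B ^ n := Nat.pow_le_pow_right (by omega) (Nat.mod_le _ _)
      have := Nat.dvd_sub h h1
      have heq : B ^ n - 1 - (B ^ n - B ^ (n % k)) = B ^ (n % k) - 1 := by omega
      rwa [heq] at this
    have hlt : B ^ (n % k) - 1 < B ^ k - 1 := by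
      have : B ^ (n % k) < B ^ k := Nat.pow_lt_pow_right (by omega) hr
      have : 1 ≤ B ^ (n % k) := Nat.one_le_pow _ _ (by omega)
      omega
    have := Nat.eq_zero_of_dvd_of_lt h2 hlt
    have hr0 : n % k = 0 := by
      by_contra hc
      have : B ≤ B ^ (n % k) := Nat.le_self_pow hc B
      omega
    exact Nat.dvd_of_mod_eq_zero hr0
  · rintro ⟨m, rfl⟩
    simpa only [one_pow, pow_mul] using Nat.sub_dvd_pow_sub_pow (B ^ k) 1 m



private lemma ord_dvd_iff {B p : ℕ} (hB : 1 ≤ B) (k : ℕ) :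
    p ∣ B ^ k - 1 ↔ orderOf (B : ZMod p) ∣ k := by
  have h : ((B : ZMod p)) ^ k = 1 ↔ (B ^ k : ℕ) ≡ 1 [MOD p] := by
    rw [← Nat.cast_pow, ← Nat.cast_one (R := ZMod p), ZMod.natCast_eq_natCast_iff]
  rw [orderOf_dvd_iff_pow_eq_one, h, Nat.ModEq.comm, Nat.modEq_iff_dvd' (Nat.one_le_pow _ _ hB)]

private lemma ord_pos {B p : ℕ} (hp : p.Prime) (hpB : ¬ p ∣ B) :
    0 < orderOf (B : ZMod p) ∧ ¬ p ∣ orderOf (B : ZMod p) := by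
  haveI : Fact p.Prime := ⟨hp⟩
  have hne : (B : ZMod p) ≠ 0 := by
    rw [Ne, ZMod.natCast_eq_zero_iff]; exact hpB
  have hd : orderOf (B : ZMod p) ∣ p - 1 := ZMod.orderOf_dvd_card_sub_one hne
  have hp1 : 0 < p - 1 := by have := hp.two_le; omega
  have hpos : 0 < orderOf (B : ZMod p) := Nat.pos_of_dvd_of_pos hd hp1
  refine ⟨hpos, fun hc => ?_⟩
  have h1 : orderOf (B : ZMod p) ≤ p - 1 := Nat.le_of_dvd hp1 hd
  have h2 : p ≤ orderOf (B : ZMod p) := Nat.le_of_dvd hpos hc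
  omega

private lemma val_odd {B p k : ℕ} (hp : p.Prime) (hodd : Odd p) (hB : 2 ≤ B)
    (hpB : ¬ p ∣ B) (he : orderOf (B : ZMod p) ∣ k) (hk : 0 < k) :
    padicValNat p (B ^ k - 1)
      = padicValNat p (B ^ orderOf (B : ZMod p) - 1) + padicValNat p k := by
  haveI : Fact p.Prime := ⟨hp⟩
  obtain ⟨he0, hpe⟩ := ord_pos hp hpB
  set e := orderOf (B : ZMod p) with hedef
  obtain ⟨j, rfl⟩ := he
  have hj0 : j ≠ 0 := by rintro rfl; simp at hk
  have h1 : 1 < B ^ e := Nat.one_lt_pow he0.ne' (by omega)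
  have hpe1 : p ∣ B ^ e - 1 := (ord_dvd_iff (by omega) e).mpr dvd_rfl
  have hx : ¬ p ∣ B ^ e := fun h => hpB (hp.dvd_of_dvd_pow h)
  have key := padicValNat.pow_sub_pow (x := B ^ e) (y := 1) hodd h1
    (by simpa using hpe1) hx hj0
  rw [one_pow, ← pow_mul] at key
  rw [key, padicValNat.mul (p := p) (by omega) hj0, padicValNat.eq_zero_of_not_dvd hpe,
    zero_add]

private lemma nat_geom {c k : ℕ} (hc : 1 ≤ c) :
    c ^ k - 1 = (c - 1) * ∑ i ∈ range k, c ^ i := by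
  have h1 : (1:ℕ) ≤ c ^ k := Nat.one_le_pow _ _ hc
  have := geom_sum_mul (c : ℤ) k
  have : ((c ^ k - 1 : ℕ) : ℤ) = (((c - 1) * ∑ i ∈ range k, c ^ i : ℕ) : ℤ) := by
    push_cast [Nat.cast_sub h1, Nat.cast_sub hc]
    linarith [this]
  exact_mod_cast this

private lemma val_two_odd {B k : ℕ} (hB2 : 2 ≤ B) (hB : ¬ 2 ∣ B) (hk : Odd k) :
    padicValNat 2 (B ^ k - 1) = padicValNat 2 (B - 1) := by
  have hS : ¬ 2 ∣ ∑ i ∈ range k, B ^ i := by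
    intro h
    have hmod : (∑ i ∈ range k, B ^ i) % 2 = 1 := by
      have h1 : ∀ i ∈ range k, B ^ i % 2 = 1 := by
        intro i _
        rw [Nat.pow_mod, Nat.two_dvd_ne_zero.mp hB, Nat.one_pow]
      calc (∑ i ∈ range k, B ^ i) % 2 = (∑ i ∈ range k, B ^ i % 2) % 2 :=
            Finset.sum_nat_mod _ _ _
        _ = (∑ _i ∈ range k, 1) % 2 := by rw [Finset.sum_congr rfl h1]
        _ = k % 2 := by simp
        _ = 1 := Nat.odd_iff.mp hk
    omega
  rw [nat_geom (by omega), padicValNat.mul (p := 2) (by omega) (fun h => hS (by simp [h])),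
    padicValNat.eq_zero_of_not_dvd hS, add_zero]

private lemma val_two_even {B k : ℕ} (hB2 : 2 ≤ B) (hB : ¬ 2 ∣ B) (hk : Even k) (hk0 : k ≠ 0) :
    padicValNat 2 (B ^ k - 1) + 1
      = padicValNat 2 (B + 1) + padicValNat 2 (B - 1) + padicValNat 2 k := by
  have := padicValNat.pow_two_sub_pow (x := B) (y := 1) (by omega)
    (by omega) hB hk0 hk
  simpa using this

private lemma keyval {B ℓ ℓ' p : ℕ} (hB : 2 ≤ B) (hp : p.Prime) (hℓ : 0 < ℓ) (hℓ' : 0 < ℓ')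
    (hpd : p ∣ B ^ Nat.gcd ℓ ℓ' - 1) :
    padicValNat p (B ^ ℓ - 1) + padicValNat p (B ^ ℓ' - 1)
      = padicValNat p (B ^ Nat.gcd ℓ ℓ' - 1) + padicValNat p (B ^ Nat.lcm ℓ ℓ' - 1) := by
  set d := Nat.gcd ℓ ℓ' with hddef
  set L := Nat.lcm ℓ ℓ' with hLdef
  have hd : 0 < d := Nat.gcd_pos_of_pos_left ℓ' hℓ
  have hL : 0 < L := Nat.lcm_pos hℓ hℓ'
  have hdℓ : d ∣ ℓ := Nat.gcd_dvd_left ℓ ℓ'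
  have hdℓ' : d ∣ ℓ' := Nat.gcd_dvd_right ℓ ℓ'
  have hdL : d ∣ L := hdℓ.trans (Nat.dvd_lcm_left ℓ ℓ')
  have hℓL : ℓ ∣ L := Nat.dvd_lcm_left ℓ ℓ'
  have hℓ'L : ℓ' ∣ L := Nat.dvd_lcm_right ℓ ℓ'
  have hmm : padicValNat p d + padicValNat p L = padicValNat p ℓ + padicValNat p ℓ' := by
    rw [← Nat.factorization_def _ hp, ← Nat.factorization_def _ hp,
      ← Nat.factorization_def _ hp, ← Nat.factorization_def _ hp,
      hddef, hLdef, Nat.factorization_gcd hℓ.ne' hℓ'.ne',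
      Nat.factorization_lcm hℓ.ne' hℓ'.ne', Finsupp.inf_apply, Finsupp.sup_apply,
      min_add_max]
  have hpB : ¬ p ∣ B := by
    intro h
    have h2 : p ∣ B ^ d := dvd_pow h hd.ne'
    have h3 : p ∣ B ^ d - (B ^ d - 1) := Nat.dvd_sub h2 hpd
    have h4 : B ^ d - (B ^ d - 1) = 1 := by
      have : 1 ≤ B ^ d := Nat.one_le_pow _ _ (by omega); omega
    rw [h4] at h3
    have := Nat.eq_one_of_dvd_one h3
    have := hp.two_le
    omega
  rcases hp.eq_two_or_odd' with rfl | hodd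
  · -- p = 2
    have hval_even : ∀ l, l ≠ 0 → Even l → padicValNat 2 (B ^ l - 1) + 1
        = padicValNat 2 (B + 1) + padicValNat 2 (B - 1) + padicValNat 2 l :=
      fun l h0 he => val_two_even hB hpB he h0
    rcases Nat.even_or_odd ℓ with heℓ | hoℓ <;> rcases Nat.even_or_odd ℓ' with heℓ' | hoℓ'
    · -- both even
      have hdE : Even d := even_iff_two_dvd.mpr
        (Nat.dvd_gcd (even_iff_two_dvd.mp heℓ) (even_iff_two_dvd.mp heℓ'))
      have hLE : Even L := even_iff_two_dvd.mpr ((even_iff_two_dvd.mp heℓ).trans hℓL)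
      have h1 := hval_even ℓ hℓ.ne' heℓ
      have h2 := hval_even ℓ' hℓ'.ne' heℓ'
      have h3 := hval_even d hd.ne' hdE
      have h4 := hval_even L hL.ne' hLE
      omega
    · -- ℓ even, ℓ' odd
      have hdO : Odd d := Nat.odd_iff.mpr (by
        have h2 : ¬ 2 ∣ d := fun h => by
          have h3 := h.trans hdℓ'
          have := Nat.odd_iff.mp hoℓ'
          omega
        omega)
      have hLE : Even L := even_iff_two_dvd.mpr ((even_iff_two_dvd.mp heℓ).trans hℓL)
      have h1 := hval_even ℓ hℓ.ne' heℓ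
      have h2 := val_two_odd hB hpB hoℓ'
      have h3 := val_two_odd hB hpB hdO
      have h4 := hval_even L hL.ne' hLE
      have z1 : padicValNat 2 ℓ' = 0 := padicValNat.eq_zero_of_not_dvd (by
        have := Nat.odd_iff.mp hoℓ'; omega)
      have z2 : padicValNat 2 d = 0 := padicValNat.eq_zero_of_not_dvd (by
        have := Nat.odd_iff.mp hdO; omega)
      omega
    · -- ℓ odd, ℓ' even
      have hdO : Odd d := Nat.odd_iff.mpr (by
        have h2 : ¬ 2 ∣ d := fun h => by
          have h3 := h.trans hdℓ
          have := Nat.odd_iff.mp hoℓ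
          omega
        omega)
      have hLE : Even L := even_iff_two_dvd.mpr ((even_iff_two_dvd.mp heℓ').trans hℓ'L)
      have h1 := val_two_odd hB hpB hoℓ
      have h2 := hval_even ℓ' hℓ'.ne' heℓ'
      have h3 := val_two_odd hB hpB hdO
      have h4 := hval_even L hL.ne' hLE
      have z1 : padicValNat 2 ℓ = 0 := padicValNat.eq_zero_of_not_dvd (by
        have := Nat.odd_iff.mp hoℓ; omega)
      have z2 : padicValNat 2 d = 0 := padicValNat.eq_zero_of_not_dvd (by
        have := Nat.odd_iff.mp hdO; omega)
      omega
    · -- both odd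
      have hLO : Odd L := by
        rcases Nat.even_or_odd L with hE | hO
        · exfalso
          have h2L : 2 ∣ L := even_iff_two_dvd.mp hE
          have hLm : L ∣ ℓ * ℓ' := Nat.lcm_dvd (dvd_mul_right ℓ ℓ') (dvd_mul_left ℓ' ℓ)
          have := (Nat.prime_two.dvd_mul).mp (h2L.trans hLm)
          rcases this with h | h
          · exact absurd h (by have := Nat.odd_iff.mp hoℓ; omega)
          · exact absurd h (by have := Nat.odd_iff.mp hoℓ'; omega)
        · exact hO
      have hdO : Odd d := Nat.odd_iff.mpr (by
        have : ¬ 2 ∣ d := fun h => by have := h.trans hdℓ; have := Nat.odd_iff.mp hoℓ; omega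
        omega)
      have h1 := val_two_odd hB hpB hoℓ
      have h2 := val_two_odd hB hpB hoℓ'
      have h3 := val_two_odd hB hpB hdO
      have h4 := val_two_odd hB hpB hLO
      omega
  · -- p odd
    have hed : orderOf (B : ZMod p) ∣ d := (ord_dvd_iff (by omega) d).mp hpd
    have hval : ∀ l, 0 < l → d ∣ l → padicValNat p (B ^ l - 1)
        = padicValNat p (B ^ orderOf (B : ZMod p) - 1) + padicValNat p l :=
      fun l hl hdl => val_odd hp hodd hB hpB (hed.trans hdl) hl
    rw [hval ℓ hℓ hdℓ, hval ℓ' hℓ' hdℓ', hval d hd dvd_rfl, hval L hL hdL]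
    omega

private lemma vmono {a b p : ℕ} (h : a ∣ b) (ha : a ≠ 0) (hb : b ≠ 0) (hp : p.Prime) :
    padicValNat p a ≤ padicValNat p b := by
  rw [← Nat.factorization_def _ hp, ← Nat.factorization_def _ hp]
  exact Finsupp.le_def.mp ((Nat.factorization_le_iff_dvd ha hb).mpr h) p

private lemma sum_geom_split (c t : ℕ) (hc : 1 ≤ c) :
    ∃ T, (∑ i ∈ range t, c ^ i) = T + t ∧ (c - 1) ∣ T := by
  refine ⟨∑ i ∈ range t, (c ^ i - 1), ?_, ?_⟩
  · calc (∑ i ∈ range t, c ^ i) = ∑ i ∈ range t, ((c ^ i - 1) + 1) := by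
          refine Finset.sum_congr rfl fun i _ => ?_
          have : 1 ≤ c ^ i := Nat.one_le_pow _ _ hc
          omega
        _ = (∑ i ∈ range t, (c ^ i - 1)) + ∑ i ∈ range t, 1 := Finset.sum_add_distrib
        _ = (∑ i ∈ range t, (c ^ i - 1)) + t := by simp
  · exact Finset.dvd_sum fun i _ => by simpa using Nat.sub_dvd_pow_sub_pow c 1 i

private lemma aux_step2 {c t : ℕ} (hc : 1 ≤ c) (ht : t ∣ c - 1) :
    t * (c - 1) ∣ c ^ t - 1 := by
  obtain ⟨T, hT, hdT⟩ := sum_geom_split c t hc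
  have htS : t ∣ ∑ i ∈ range t, c ^ i := by
    rw [hT]; exact Nat.dvd_add (ht.trans hdT) dvd_rfl
  rw [nat_geom hc, mul_comm t (c - 1)]
  exact mul_dvd_mul_left _ htS

private lemma mem_nat {B ℓ ℓ' : ℕ} (hB : 2 ≤ B) (hℓ : 0 < ℓ) (hℓ' : 0 < ℓ') :
    (B ^ ℓ - 1) * (B ^ ℓ' - 1) ∣ (B ^ Nat.gcd ℓ ℓ' - 1) * (B ^ Nat.lcm ℓ ℓ' - 1) := by
  set d := Nat.gcd ℓ ℓ' with hddef
  set L := Nat.lcm ℓ ℓ' with hLdef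
  have hd : 0 < d := Nat.gcd_pos_of_pos_left ℓ' hℓ
  have hL : 0 < L := Nat.lcm_pos hℓ hℓ'
  have hpow : ∀ k, 0 < k → 1 ≤ B ^ k - 1 := fun k hk => by
    have := Nat.one_lt_pow hk.ne' (show 1 < B by omega); omega
  have hNA := hpow ℓ hℓ; have hNA' := hpow ℓ' hℓ'; have hg := hpow d hd; have hC := hpow L hL
  rw [← Nat.factorization_le_iff_dvd (by positivity) (by positivity)]
  rw [Finsupp.le_def]
  intro p
  by_cases hp : p.Prime
  · rw [Nat.factorization_mul (by omega) (by omega),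
      Nat.factorization_mul (by omega) (by omega), Finsupp.add_apply, Finsupp.add_apply,
      Nat.factorization_def _ hp, Nat.factorization_def _ hp,
      Nat.factorization_def _ hp, Nat.factorization_def _ hp]
    by_cases hpd : p ∣ B ^ d - 1
    · exact (keyval hB hp hℓ hℓ' hpd).le
    · have hdvdL : ∀ k, 0 < k → k ∣ L → B ^ k - 1 ∣ B ^ L - 1 :=
        fun k hk hkL => (pow_dvd_iff hB hk).mpr hkL
      have hor : ¬ p ∣ B ^ ℓ - 1 ∨ ¬ p ∣ B ^ ℓ' - 1 := by
        by_contra hc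
        push_neg at hc
        obtain ⟨h1, h2⟩ := hc
        have e1 := (ord_dvd_iff (B := B) (by omega) ℓ).mp h1
        have e2 := (ord_dvd_iff (B := B) (by omega) ℓ').mp h2
        exact hpd ((ord_dvd_iff (by omega) d).mpr (Nat.dvd_gcd e1 e2))
      rcases hor with h | h
      · have z : padicValNat p (B ^ ℓ - 1) = 0 := padicValNat.eq_zero_of_not_dvd h
        have hle : padicValNat p (B ^ ℓ' - 1) ≤ padicValNat p (B ^ L - 1) :=
          vmono (hdvdL ℓ' hℓ' (Nat.dvd_lcm_right ℓ ℓ')) (by omega) (by omega) hp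
        omega
      · have z : padicValNat p (B ^ ℓ' - 1) = 0 := padicValNat.eq_zero_of_not_dvd h
        have hle : padicValNat p (B ^ ℓ - 1) ≤ padicValNat p (B ^ L - 1) :=
          vmono (hdvdL ℓ hℓ (Nat.dvd_lcm_left ℓ ℓ')) (by omega) (by omega) hp
        omega
  · simp [Nat.factorization_eq_zero_of_not_prime _ hp]

private lemma min_nat {B ℓ ℓ' n : ℕ} (hB : 2 ≤ B) (hℓ : 0 < ℓ) (hℓ' : 0 < ℓ') (hn : 0 < n)
    (hdvd : (B ^ ℓ - 1) * (B ^ ℓ' - 1) ∣ B ^ n - 1) :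
    (B ^ Nat.gcd ℓ ℓ' - 1) * Nat.lcm ℓ ℓ' ≤ n := by
  set d := Nat.gcd ℓ ℓ' with hddef
  set L := Nat.lcm ℓ ℓ' with hLdef
  have hd : 0 < d := Nat.gcd_pos_of_pos_left ℓ' hℓ
  have hL : 0 < L := Nat.lcm_pos hℓ hℓ'
  have hpow : ∀ k, 0 < k → 1 ≤ B ^ k - 1 := fun k hk => by
    have := Nat.one_lt_pow hk.ne' (show 1 < B by omega); omega
  have hℓn : ℓ ∣ n := (pow_dvd_iff hB hℓ).mp ((dvd_mul_right _ _).trans hdvd)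
  have hℓ'n : ℓ' ∣ n := (pow_dvd_iff hB hℓ').mp ((dvd_mul_left _ _).trans hdvd)
  have hLn : L ∣ n := Nat.lcm_dvd hℓn hℓ'n
  obtain ⟨m, rfl⟩ := hLn
  have hm : 0 < m := Nat.pos_of_ne_zero (by rintro rfl; simp at hn)
  set C := B ^ L with hCdef
  have hC1 : 1 < C := Nat.one_lt_pow hL.ne' (by omega)
  have hCn : B ^ (L * m) - 1 = C ^ m - 1 := by rw [hCdef, pow_mul]
  obtain ⟨T, hT, hdT⟩ := sum_geom_split C m (by omega)
  have hsq : (B ^ ℓ - 1) * (B ^ ℓ' - 1) ∣ (C - 1) * (C - 1) :=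
    mul_dvd_mul ((pow_dvd_iff hB hℓ).mpr (Nat.dvd_lcm_left ℓ ℓ'))
      ((pow_dvd_iff hB hℓ').mpr (Nat.dvd_lcm_right ℓ ℓ'))
  have hexp : C ^ m - 1 = (C - 1) * T + (C - 1) * m := by
    rw [nat_geom (by omega), hT, Nat.mul_add]
  have h2 : (B ^ ℓ - 1) * (B ^ ℓ' - 1) ∣ (C - 1) * T :=
    hsq.trans (mul_dvd_mul_left _ hdT)
  have h3 : (B ^ ℓ - 1) * (B ^ ℓ' - 1) ∣ m * (C - 1) := by
    have h4 := Nat.dvd_sub (hCn ▸ hdvd) h2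
    rw [hexp, Nat.add_sub_cancel_left] at h4
    rw [mul_comm m (C - 1)]
    exact h4
  have hg1 : 1 ≤ B ^ d - 1 := hpow d hd
  have hC0 : C - 1 ≠ 0 := by omega
  have hgm : (B ^ d - 1) ∣ m := by
    rw [← Nat.factorization_le_iff_dvd (by omega) hm.ne', Finsupp.le_def]
    intro p
    by_cases hp : p.Prime
    · haveI : Fact p.Prime := ⟨hp⟩
      rw [Nat.factorization_def _ hp, Nat.factorization_def _ hp]
      by_cases hpd : p ∣ B ^ d - 1
      · have hkv := keyval hB hp hℓ hℓ' hpd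
        have hle : padicValNat p ((B ^ ℓ - 1) * (B ^ ℓ' - 1))
            ≤ padicValNat p (m * (C - 1)) :=
          vmono h3 (by have := hpow ℓ hℓ; have := hpow ℓ' hℓ'; positivity)
            (by positivity) hp
        rw [padicValNat.mul (by have := hpow ℓ hℓ; omega) (by have := hpow ℓ' hℓ'; omega),
          padicValNat.mul hm.ne' hC0] at hle
        have hCL : padicValNat p (C - 1) = padicValNat p (B ^ Nat.lcm ℓ ℓ' - 1) := by
          rw [hCdef, hLdef]
        have hgd : padicValNat p (B ^ d - 1) = padicValNat p (B ^ Nat.gcd ℓ ℓ' - 1) := by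
          rw [hddef]
        omega
      · rw [padicValNat.eq_zero_of_not_dvd hpd]; omega
    · simp [Nat.factorization_eq_zero_of_not_prime _ hp]
  have hgle : B ^ d - 1 ≤ m := Nat.le_of_dvd hm hgm
  calc (B ^ d - 1) * L ≤ m * L := Nat.mul_le_mul_right _ hgle
    _ = L * m := mul_comm _ _


theorem least_product_period (b : ℤ) (hb : 2 ≤ b) (ℓ ℓ' : ℕ) (hℓ : 0 < ℓ) (hℓ' : 0 < ℓ') :
    IsLeast {n : ℕ | 0 < n ∧ (b ^ ℓ - 1) * (b ^ ℓ' - 1) ∣ b ^ n - 1}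
      ((b.toNat ^ Nat.gcd ℓ ℓ' - 1) * Nat.lcm ℓ ℓ') := by
  set B := b.toNat with hBdef
  have hbB : (B : ℤ) = b := Int.toNat_of_nonneg (by omega)
  have hB : 2 ≤ B := by
    rw [hBdef]; exact (Int.le_toNat (by omega)).mpr hb
  have hcast : ∀ k : ℕ, ((B ^ k - 1 : ℕ) : ℤ) = b ^ k - 1 := by
    intro k
    rw [Nat.cast_sub (Nat.one_le_pow _ _ (by omega))]
    push_cast [hbB]
    ring
  have hiff : ∀ n : ℕ, ((b ^ ℓ - 1) * (b ^ ℓ' - 1) ∣ b ^ n - 1)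
      ↔ ((B ^ ℓ - 1) * (B ^ ℓ' - 1) ∣ B ^ n - 1) := by
    intro n
    rw [← hcast, ← hcast, ← hcast, ← Nat.cast_mul, Int.natCast_dvd_natCast]
  have hd : 0 < Nat.gcd ℓ ℓ' := Nat.gcd_pos_of_pos_left ℓ' hℓ
  have hL : 0 < Nat.lcm ℓ ℓ' := Nat.lcm_pos hℓ hℓ'
  have hg1 : 1 ≤ B ^ Nat.gcd ℓ ℓ' - 1 := by
    have := Nat.one_lt_pow hd.ne' (show 1 < B by omega); omega
  constructor
  · refine ⟨Nat.mul_pos (by omega) hL, (hiff _).mpr ?_⟩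
    have step1 := mem_nat hB hℓ hℓ'
    have hgdvd : (B ^ Nat.gcd ℓ ℓ' - 1) ∣ B ^ Nat.lcm ℓ ℓ' - 1 :=
      (pow_dvd_iff hB hd).mpr ((Nat.gcd_dvd_left ℓ ℓ').trans (Nat.dvd_lcm_left ℓ ℓ'))
    have step2 : (B ^ Nat.gcd ℓ ℓ' - 1) * (B ^ Nat.lcm ℓ ℓ' - 1)
        ∣ (B ^ Nat.lcm ℓ ℓ') ^ (B ^ Nat.gcd ℓ ℓ' - 1) - 1 :=
      aux_step2 (Nat.one_le_pow _ _ (by omega)) hgdvd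
    rw [← pow_mul] at step2
    rw [mul_comm (B ^ Nat.gcd ℓ ℓ' - 1) (Nat.lcm ℓ ℓ')]
    exact step1.trans step2
  · rintro n ⟨hn0, hndvd⟩
    exact min_nat hB hℓ hℓ' hn0 ((hiff n).mp hndvd)
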